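/- For every m ∈ ℕ, the map of simplicial sets N p : N D[m] → Δ[m] induced by the functor p : D[m] → [m] is a simplicial homotopy equivalence: there exists a map g : Δ[m] → N D[m] such that N p ∘ g is homotopic to the identity of Δ[m] and g ∘ N p is homotopic to the identity of N D[m], where 'homotopic' denotes the equivalence relation on maps of simplicial sets generated by Δ[1]-homotopies. -/

import Mathlib

open CategoryTheory CategoryTheory.Limits Simplicial SSet

noncomputable section

/-- Objects of the direct category `D[n]`: pairs `([k], φ)` of a natural number `k` and an
order-preserving map `φ : [k] → [n]`. -/
structure DObj (n : ℕ) : Type where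
  k : ℕ
  φ : Fin (k + 1) →o Fin (n + 1)

/-- Morphisms `([k], φ) → ([k'], φ')` of `D[n]`: injective order-preserving maps
`f : [k] → [k']` with `φ' ∘ f = φ`. -/
@[ext]
structure DHom {n : ℕ} (x y : DObj n) : Type where
  f : Fin (x.k + 1) →o Fin (y.k + 1)
  inj : Function.Injective f
  comm : y.φ.comp f = x.φ

instance DCat (n : ℕ) : Category (DObj n) where
  Hom := DHom
  id x := ⟨OrderHom.id, fun _ _ h => h, rfl⟩
  comp {x y z} g h := ⟨h.f.comp g.f, h.inj.comp g.inj, by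
    change (z.φ.comp h.f).comp g.f = x.φ
    rw [h.comm, g.comm]⟩
  id_comp f := rfl
  comp_id f := rfl
  assoc f g h := rfl

/-- The functor `p : D[n] → [n]` on objects: `([k], φ) ↦ φ(k)`. -/
def pObj {n : ℕ} (x : DObj n) : Fin (n + 1) := x.φ (Fin.last x.k)

lemma pObj_le {n : ℕ} {x y : DObj n} (g : x ⟶ y) : pObj x ≤ pObj y := by
  unfold pObj
  rw [← g.comm]
  exact y.φ.monotone (Fin.le_last _)

/-- The map `N p : N D[n] ⟶ Δ[n]`, componentwise. -/
def NpApp {n : ℕ} (m : SimplexCategoryᵒᵖ) (F : (nerve (DObj n)).obj m) : Δ[n].obj m :=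
  SSet.stdSimplex.objMk
    ⟨fun i => pObj (F.obj i), fun _ _ hij => pObj_le (F.map (homOfLE hij))⟩

/-- The map of simplicial sets `N p : N D[n] ⟶ Δ[n]` induced by the functor
`p : D[n] → [n]`, `([k], φ) ↦ φ(k)`. -/
def Np (n : ℕ) : (nerve (DObj n) : SSet) ⟶ Δ[n] where
  app m := TypeCat.ofHom (NpApp m)
  naturality _ _ _ := rfl

/-- The map `X ⟶ Δ[1]` constant at the vertex `k`. -/
def constΔ1 (X : SSet) (k : Fin 2) : X ⟶ Δ[1] where
  app m := TypeCat.ofHom fun _ => SSet.stdSimplex.const 1 k m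
  naturality := by intros; rfl

/-- `H : X ⨯ Δ[1] ⟶ Y` is a (simplicial) homotopy from `a` to `b` if it restricts to `a`
on `X × {0}` and to `b` on `X × {1}`. -/
def IsHomotopy {X Y : SSet} (H : X ⨯ Δ[1] ⟶ Y) (a b : X ⟶ Y) : Prop :=
  prod.lift (𝟙 X) (constΔ1 X 0) ≫ H = a ∧ prod.lift (𝟙 X) (constΔ1 X 1) ≫ H = b

/-- "There is a homotopy from `a` to `b`". -/
def HtpyRel (X Y : SSet) (a b : X ⟶ Y) : Prop := ∃ H, IsHomotopy H a b

/-! ### Auxiliary material: homotopies from natural transformations -/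

namespace NpHtpyAux

variable {C : Type} [SmallCategory C]

/-- The map of nerves induced by an endofunctor. -/
def nmap (F : C ⥤ C) : (nerve C : SSet) ⟶ (nerve C) where
  app _ := TypeCat.ofHom fun S => S ⋙ F
  naturality _ _ _ := rfl

/-- Selecting one of the two functors. -/
def pick (F G : C ⥤ C) : Fin 2 → (C ⥤ C) := fun i => match i with
  | 0 => F
  | 1 => G

variable {F G : C ⥤ C}

/-- Transition morphisms of the cylinder construction. -/
def tmap (η : F ⟶ G) : ∀ (a b : Fin 2), a ≤ b → ∀ {X Y : C}, (X ⟶ Y) →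
    ((pick F G a).obj X ⟶ (pick F G b).obj Y) := fun a b h {_ _} f => match a, b, h with
  | 0, 0, _ => F.map f
  | 0, 1, _ => F.map f ≫ η.app _
  | 1, 1, _ => G.map f
  | 1, 0, h => absurd h (by decide)

lemma tmap_id (η : F ⟶ G) (a : Fin 2) (h : a ≤ a) (X : C) :
    tmap η a a h (𝟙 X) = 𝟙 ((pick F G a).obj X) := by
  fin_cases a <;> simp [tmap, pick]

lemma tmap_comp (η : F ⟶ G) (a b c : Fin 2) (hab : a ≤ b) (hbc : b ≤ c) (hac : a ≤ c)
    {X Y Z : C} (f : X ⟶ Y) (g : Y ⟶ Z) :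
    tmap η a c hac (f ≫ g) = tmap η a b hab f ≫ tmap η b c hbc g := by
  fin_cases a <;> fin_cases b <;> fin_cases c <;>
    first
      | exact absurd hab (by decide)
      | exact absurd hbc (by decide)
      | exact absurd hac (by decide)
      | simp [tmap, pick, η.naturality]

/-- The simplexwise cylinder of a natural transformation. -/
def cylFun (η : F ⟶ G) {k : ℕ} (S : Fin (k + 1) ⥤ C) (β : Fin (k + 1) →o Fin 2) :
    Fin (k + 1) ⥤ C where
  obj i := (pick F G (β i)).obj (S.obj i)
  map {i j} h := tmap η (β i) (β j) (β.monotone (leOfHom h)) (S.map h)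
  map_id i := (congrArg (tmap η (β i) (β i) _) (S.map_id i)).trans (tmap_id η _ _ _)
  map_comp f g := (congrArg (tmap η _ _ _) (S.map_comp f g)).trans
    (tmap_comp η _ _ _ _ _ _ _ _)

/-- First projection from the cylinder on the nerve. -/
def pr1 : (nerve C ⨯ Δ[1] : SSet) ⟶ (nerve C : SSet) := Limits.prod.fst

/-- Second projection from the cylinder on the nerve. -/
def pr2 : (nerve C ⨯ Δ[1] : SSet) ⟶ Δ[1] := Limits.prod.snd

/-- The homotopy associated with a natural transformation. -/
def cylH (η : F ⟶ G) : (nerve C ⨯ Δ[1] : SSet) ⟶ (nerve C : SSet) where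
  app k := TypeCat.ofHom fun z => cylFun η (pr1.app k z) ((pr2.app k z).down.toOrderHom)
  naturality k k' σ := by
    ext z
    have h1 : pr1.app k' (((nerve C ⨯ Δ[1]) : SSet).map σ z) =
        (nerve C : SSet).map σ (pr1.app k z) := ConcreteCategory.congr_hom (pr1.naturality σ) z
    have h2 : pr2.app k' (((nerve C ⨯ Δ[1]) : SSet).map σ z) =
        Δ[1].map σ (pr2.app k z) := ConcreteCategory.congr_hom (pr2.naturality σ) z
    show cylFun η (pr1.app k' (((nerve C ⨯ Δ[1]) : SSet).map σ z))
      ((pr2.app k' (((nerve C ⨯ Δ[1]) : SSet).map σ z)).down.toOrderHom) = _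
    rw [h1, h2]
    rfl

/-- Any natural transformation between endofunctors induces a homotopy between the
corresponding maps of nerves. -/
lemma htpy_nmap (η : F ⟶ G) : HtpyRel (nerve C) (nerve C) (nmap F) (nmap G) := by
  refine ⟨cylH η, ?_, ?_⟩ <;>
  · apply SSet.hom_ext
    intro k
    ext z
    have e1 := ConcreteCategory.congr_hom (congr_app (prod.lift_fst (𝟙 (nerve C : SSet)) (constΔ1 _ 0)) k) z
    have e1' := ConcreteCategory.congr_hom (congr_app (prod.lift_fst (𝟙 (nerve C : SSet)) (constΔ1 _ 1)) k) z
    have e2 := ConcreteCategory.congr_hom (congr_app (prod.lift_snd (𝟙 (nerve C : SSet)) (constΔ1 _ 0)) k) z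
    have e2' := ConcreteCategory.congr_hom (congr_app (prod.lift_snd (𝟙 (nerve C : SSet)) (constΔ1 _ 1)) k) z
    show cylFun η (pr1.app k ((prod.lift (𝟙 (nerve C : SSet)) (constΔ1 _ _)).app k z))
      ((pr2.app k ((prod.lift (𝟙 (nerve C : SSet)) (constΔ1 _ _)).app k z)).down.toOrderHom) = _
    first
    | (rw [show pr1.app k ((prod.lift (𝟙 (nerve C : SSet)) (constΔ1 _ 0)).app k z) = z from e1,
          show pr2.app k ((prod.lift (𝟙 (nerve C : SSet)) (constΔ1 _ 0)).app k z) = _ from e2]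
       rfl)
    | (rw [show pr1.app k ((prod.lift (𝟙 (nerve C : SSet)) (constΔ1 _ 1)).app k z) = z from e1',
          show pr2.app k ((prod.lift (𝟙 (nerve C : SSet)) (constΔ1 _ 1)).app k z) = _ from e2']
       rfl)

end NpHtpyAux

/-! ### Auxiliary material specific to `D[n]` -/

namespace NpAux

variable {n : ℕ}

/-- `s(j) = ([j], incl)`. -/
def sObj (n : ℕ) (j : Fin (n + 1)) : DObj n :=
  ⟨j, ⟨fun i => ⟨i, lt_of_lt_of_le i.2 (Nat.succ_le_succ (Fin.is_le j))⟩,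
    fun _ _ h => h⟩⟩

/-- `s` on morphisms. -/
def sHom {j j' : Fin (n + 1)} (h : j ≤ j') : sObj n j ⟶ sObj n j' :=
  ⟨⟨fun i => ⟨i, lt_of_lt_of_le i.2 (Nat.succ_le_succ h)⟩, fun _ _ hh => hh⟩,
    fun a b hab => by
      have h2 := congrArg Fin.val hab
      exact Fin.ext h2, rfl⟩

/-- The section `g : Δ[n] ⟶ N D[n]` of `N p`. -/
def gMap (n : ℕ) : Δ[n] ⟶ (nerve (DObj n) : SSet) where
  app k := TypeCat.ofHom fun α =>
    { obj := fun i => sObj n (α.down.toOrderHom i)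
      map := fun {i j} h => sHom (α.down.toOrderHom.monotone (leOfHom h))
      map_id := fun _ => rfl
      map_comp := fun _ _ => rfl }
  naturality _ _ _ := rfl

/-- The endofunctor `s ∘ p` of `D[n]`. -/
def Qfun (n : ℕ) : DObj n ⥤ DObj n where
  obj x := sObj n (pObj x)
  map g := sHom (pObj_le g)
  map_id _ := rfl
  map_comp _ _ := rfl

lemma snoc_id {a : ℕ} (i : Fin (a + 1 + 1)) :
    Fin.snoc (α := fun _ => Fin (a + 1 + 1)) (fun j : Fin (a + 1) => j.castSucc)
      (Fin.last (a + 1)) i = i := by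
  induction i using Fin.lastCases with
  | last => rw [Fin.snoc_last]
  | cast i' => rw [Fin.snoc_castSucc]

lemma snoc_comp {a b c : ℕ} (u : Fin (a + 1) → Fin (b + 1)) (v : Fin (b + 1) → Fin (c + 1))
    (i : Fin (a + 1 + 1)) :
    Fin.snoc (α := fun _ => Fin (c + 1 + 1)) (fun i => (v (u i)).castSucc) (Fin.last (c + 1)) i
      = Fin.snoc (α := fun _ => Fin (c + 1 + 1)) (fun i => (v i).castSucc) (Fin.last (c + 1))
          (Fin.snoc (α := fun _ => Fin (b + 1 + 1)) (fun i => (u i).castSucc)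
            (Fin.last (b + 1)) i) := by
  induction i using Fin.lastCases with
  | last => rw [Fin.snoc_last, Fin.snoc_last, Fin.snoc_last]
  | cast i' => rw [Fin.snoc_castSucc, Fin.snoc_castSucc, Fin.snoc_castSucc]

/-- extend `φ` by the top value `n`. -/
def extendφ (x : DObj n) : Fin (x.k + 1 + 1) →o Fin (n + 1) :=
  ⟨Fin.snoc x.φ (Fin.last n), by
    intro i j hij
    induction j using Fin.lastCases with
    | last => rw [Fin.snoc_last]; exact Fin.le_last _
    | cast j' =>
      induction i using Fin.lastCases with
      | last => exact absurd hij (Fin.castSucc_lt_last j').not_ge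
      | cast i' =>
        rw [Fin.snoc_castSucc, Fin.snoc_castSucc]
        exact x.φ.monotone (by simpa using hij)⟩

/-- The cone functor: append a last vertex with value `n`. -/
def ConeF (n : ℕ) : DObj n ⥤ DObj n where
  obj x := ⟨x.k + 1, extendφ x⟩
  map {x y} g :=
    { f := ⟨Fin.snoc (fun i => (g.f i).castSucc) (Fin.last (y.k + 1)), by
        intro i j hij
        induction j using Fin.lastCases with
        | last => rw [Fin.snoc_last]; exact Fin.le_last _
        | cast j' =>
          induction i using Fin.lastCases with
          | last => exact absurd hij (Fin.castSucc_lt_last j').not_ge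
          | cast i' =>
            rw [Fin.snoc_castSucc, Fin.snoc_castSucc]
            exact Fin.castSucc_le_castSucc_iff.mpr (g.f.monotone (by simpa using hij))⟩
      inj := by
        intro i j hij
        change Fin.snoc (α := fun _ => Fin (y.k + 1 + 1)) (fun i => (g.f i).castSucc)
          (Fin.last (y.k + 1)) i = Fin.snoc (α := fun _ => Fin (y.k + 1 + 1))
          (fun i => (g.f i).castSucc) (Fin.last (y.k + 1)) j at hij
        induction j using Fin.lastCases with
        | last =>
          induction i using Fin.lastCases with
          | last => rfl
          | cast i' =>
            rw [Fin.snoc_castSucc, Fin.snoc_last] at hij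
            exact absurd hij (Fin.castSucc_lt_last _).ne
        | cast j' =>
          induction i using Fin.lastCases with
          | last =>
            rw [Fin.snoc_castSucc, Fin.snoc_last] at hij
            exact absurd hij.symm (Fin.castSucc_lt_last _).ne
          | cast i' =>
            rw [Fin.snoc_castSucc, Fin.snoc_castSucc] at hij
            exact congrArg Fin.castSucc (g.inj (Fin.castSucc_injective _ hij))
      comm := by
        apply OrderHom.ext
        funext i
        induction i using Fin.lastCases with
        | last =>
          change Fin.snoc (α := fun _ => Fin (n + 1)) y.φ (Fin.last n)
            (Fin.snoc (α := fun _ => Fin (y.k + 1 + 1)) (fun i => (g.f i).castSucc)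
              (Fin.last (y.k + 1)) _) = Fin.snoc (α := fun _ => Fin (n + 1)) x.φ (Fin.last n) _
          simp [extendφ, Fin.snoc_last]
        | cast i' =>
          change Fin.snoc (α := fun _ => Fin (n + 1)) y.φ (Fin.last n)
            (Fin.snoc (α := fun _ => Fin (y.k + 1 + 1)) (fun i => (g.f i).castSucc)
              (Fin.last (y.k + 1)) _) = Fin.snoc (α := fun _ => Fin (n + 1)) x.φ (Fin.last n) _
          simp only [extendφ, OrderHom.comp_coe, OrderHom.coe_mk, Function.comp_apply,
            Fin.snoc_castSucc]
          exact DFunLike.congr_fun g.comm i' }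
  map_id x := by
    apply DHom.ext
    apply OrderHom.ext
    funext i
    exact snoc_id i
  map_comp {x y z} g h := by
    apply DHom.ext
    apply OrderHom.ext
    funext i
    exact snoc_comp (fun j => g.f j) (fun j => h.f j) i

/-- The vertex `([0], n)`. -/
def vObj (n : ℕ) : DObj n := ⟨0, OrderHom.const _ (Fin.last n)⟩

/-- The natural inclusion `x ⟶ Cone x`. -/
def ηCone (n : ℕ) : 𝟭 (DObj n) ⟶ ConeF n where
  app x := ⟨⟨Fin.castSucc, fun _ _ h => Fin.castSucc_le_castSucc_iff.mpr h⟩,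
    Fin.castSucc_injective _, by
      apply OrderHom.ext
      funext i
      show Fin.snoc (α := fun _ => Fin (n + 1)) (⇑x.φ) (Fin.last n) i.castSucc = x.φ i
      rw [Fin.snoc_castSucc]⟩
  naturality x y g := by
    apply DHom.ext
    apply OrderHom.ext
    funext i
    show (g.f i).castSucc = Fin.snoc (α := fun _ => Fin (y.k + 1 + 1))
      (fun j => (g.f j).castSucc) (Fin.last (y.k + 1)) i.castSucc
    rw [Fin.snoc_castSucc]

/-- The natural inclusion of `([0], n)` as the cone point. -/
def ηVCone (n : ℕ) : (Functor.const (DObj n)).obj (vObj n) ⟶ ConeF n where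
  app x := ⟨OrderHom.const _ (Fin.last (x.k + 1)),
    fun a b _ => by
      have h1 : ∀ p q : Fin 1, p = q := fun p q => Subsingleton.elim p q
      exact h1 a b, by
      apply OrderHom.ext
      funext i
      show Fin.snoc (α := fun _ => Fin (n + 1)) (⇑x.φ) (Fin.last n) (Fin.last (x.k + 1))
        = Fin.last n
      rw [Fin.snoc_last]⟩
  naturality x y g := by
    apply DHom.ext
    apply OrderHom.ext
    funext i
    show Fin.last (y.k + 1) = Fin.snoc (α := fun _ => Fin (y.k + 1 + 1))
      (fun j => (g.f j).castSucc) (Fin.last (y.k + 1)) (Fin.last (x.k + 1))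
    rw [Fin.snoc_last]

/-- The morphism `([0], n) ⟶ ([n], id)`, as a constant natural transformation. -/
def ηVS (n : ℕ) : (Functor.const (DObj n)).obj (vObj n) ⟶
    (Functor.const (DObj n)).obj (sObj n (Fin.last n)) where
  app _ := ⟨OrderHom.const _ (Fin.last n), fun a b _ => by
      have h1 : ∀ p q : Fin 1, p = q := fun p q => Subsingleton.elim p q
      exact h1 a b, by
    apply OrderHom.ext
    funext i
    rfl⟩
  naturality x y g := by
    apply DHom.ext
    rfl

/-- The natural transformation `s ∘ p ⟶ const ([n], id)`. -/
def ηQS (n : ℕ) : Qfun n ⟶ (Functor.const (DObj n)).obj (sObj n (Fin.last n)) where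
  app x := sHom (Fin.le_last (pObj x))
  naturality x y g := by
    apply DHom.ext
    rfl

end NpAux

/-- for every `m`, the map `N p : N D[m] ⟶ Δ[m]` induced by the functor
`p : D[m] → [m]` is a simplicial homotopy equivalence: there is `g : Δ[m] ⟶ N D[m]` such
that `N p ∘ g` is homotopic to the identity of `Δ[m]` and `g ∘ N p` is homotopic to the
identity of `N D[m]`, where "homotopic" is the equivalence relation generated by
`Δ[1]`-homotopies. -/
theorem Np_homotopy_equivalence (m : ℕ) :
    ∃ g : Δ[m] ⟶ (nerve (DObj m) : SSet),
      Relation.EqvGen (HtpyRel Δ[m] Δ[m]) (g ≫ Np m) (𝟙 Δ[m]) ∧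
      Relation.EqvGen (HtpyRel (nerve (DObj m)) (nerve (DObj m))) (Np m ≫ g)
        (𝟙 (nerve (DObj m) : SSet)) := by
  refine ⟨NpAux.gMap m, ?_, ?_⟩
  · have h : NpAux.gMap m ≫ Np m = 𝟙 Δ[m] := by
      apply SSet.hom_ext
      intro k
      ext α
      with_unfolding_all rfl
    rw [h]
    exact Relation.EqvGen.refl _
  · have h0 : Np m ≫ NpAux.gMap m = NpHtpyAux.nmap (NpAux.Qfun m) := by
      apply SSet.hom_ext
      intro k
      ext S
      with_unfolding_all rfl
    have h5 : NpHtpyAux.nmap (𝟭 (DObj m)) = 𝟙 (nerve (DObj m) : SSet) := rfl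
    rw [h0, ← h5]
    exact Relation.EqvGen.trans _ _ _ (Relation.EqvGen.rel _ _ (NpHtpyAux.htpy_nmap (NpAux.ηQS m)))
      (Relation.EqvGen.trans _ _ _
        (Relation.EqvGen.symm _ _ (Relation.EqvGen.rel _ _ (NpHtpyAux.htpy_nmap (NpAux.ηVS m))))
        (Relation.EqvGen.trans _ _ _
          (Relation.EqvGen.rel _ _ (NpHtpyAux.htpy_nmap (NpAux.ηVCone m)))
          (Relation.EqvGen.symm _ _
            (Relation.EqvGen.rel _ _ (NpHtpyAux.htpy_nmap (NpAux.ηCone m))))))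

end
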